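/- arXiv:1810.05086 — 8 statements merged into one kernel-verified Lean document; each statement's English description precedes it below -/
import Mathlib

section
/- Let M be a complete lattice with an involutive antitone negation ', let T be a set and R a binary relation on T such that both R and R⁻¹ are serial. Define Ĝ(p)(x) = ⨅{p(y) : x R y} and Ĥ(p)(x) = ⨅{p(y) : y R x} on T → M. Then for every p : T → M, p ≤ Ĝ((Ĥ(p'))') and p ≤ Ĥ((Ĝ(p'))'), where the order and negation on T → M are pointwise. -/
/-- Let `M` be a complete lattice with an involutive antitone negation, `R` a
relation on `T` with both `R` and `R⁻¹` serial, and `Ĝ`, `Ĥ` the operators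
constructed by means of `(T, R)`. Then `p ≤ Ĝ((Ĥ(p'))')` and
`p ≤ Ĥ((Ĝ(p'))')` for every `p : T → M` (axiom (P3)). -/
theorem stmt_4 {M T : Type*} [CompleteLattice M]
    (neg : M → M)
    (hanti : ∀ a b : M, a ≤ b → neg b ≤ neg a)
    (hinv : ∀ a : M, neg (neg a) = a)
    (R : T → T → Prop)
    (hser : ∀ x : T, ∃ y : T, R x y)
    (hser' : ∀ x : T, ∃ y : T, R y x)
    (G H : (T → M) → (T → M))
    (hGdef : ∀ (p : T → M) (x : T), G p x = ⨅ y ∈ {y : T | R x y}, p y)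
    (hHdef : ∀ (p : T → M) (x : T), H p x = ⨅ y ∈ {y : T | R y x}, p y) :
    ∀ p : T → M,
      p ≤ G (fun t => neg (H (fun s => neg (p s)) t)) ∧
      p ≤ H (fun t => neg (G (fun s => neg (p s)) t)) := by
  intro p
  constructor
  · intro x
    rw [hGdef]
    refine le_iInf₂ fun y hy => ?_
    have h1 : H (fun s => neg (p s)) y ≤ neg (p x) := by
      rw [hHdef]
      have h2 : R x y := hy
      exact iInf_le_of_le x (iInf_le _ h2)
    calc p x = neg (neg (p x)) := (hinv _).symm
      _ ≤ neg (H (fun s => neg (p s)) y) := hanti _ _ h1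
  · intro x
    rw [hHdef]
    refine le_iInf₂ fun y hy => ?_
    have h1 : G (fun s => neg (p s)) y ≤ neg (p x) := by
      rw [hGdef]
      have h2 : R y x := hy
      exact iInf_le_of_le x (iInf_le _ h2)
    calc p x = neg (neg (p x)) := (hinv _).symm
      _ ≤ neg (G (fun s => neg (p s)) y) := hanti _ _ h1
end

section
/- Let A be a De Morgan poset and D a nonempty proper down-set of A. Then κ_D : A → M₂ is a morphism of De Morgan posets: κ_D is monotone, κ_D(0) = (false, false), κ_D(1) = (true, true), and κ_D(a') = (κ_D(a))' for all a ∈ A, where the negation on M₂ is (a,b)' = (¬b, ¬a). -/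
/-- A down-set of a poset. -/
def IsDownSet {A : Type*} [PartialOrder A] (D : Set A) : Prop :=
  ∀ ⦃x y : A⦄, x ≤ y → y ∈ D → x ∈ D

/-- A nonempty proper down-set of a poset. -/
def IsProperDownSet {A : Type*} [PartialOrder A] (D : Set A) : Prop :=
  D.Nonempty ∧ D ≠ Set.univ ∧ IsDownSet D

open Classical in
/-- `hD D a = false` iff `a ∈ D`. -/
noncomputable def hD {A : Type*} (D : Set A) (a : A) : Bool :=
  if a ∈ D then false else true

/-- `κ_D(a) = (h_D(a), h_D^∂(a))` where `h_D^∂(a) = ¬ h_D(a')`. -/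
noncomputable def kappa {A : Type*} (neg : A → A) (D : Set A) (a : A) :
    Bool × Bool := (hD D a, ! hD D (neg a))

/-- The negation of the four-element De Morgan poset `M₂`: `(a,b)' = (¬b, ¬a)`. -/
def negM2 (m : Bool × Bool) : Bool × Bool := (! m.2, ! m.1)

/-- The relation `R_G` on down-sets: `D R_G E` iff `κ_D(G x) ≤ κ_E(x)` for all `x ∈ dom G`. -/
def RG {A : Type*} (neg : A → A) (domG : Set A) (G : A → A) (D E : Set A) : Prop :=
  ∀ x ∈ domG, kappa neg D (G x) ≤ kappa neg E x

/-- For any nonempty proper down-set `D` of a De Morgan poset `A`, the map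
`κ_D : A → M₂` is a morphism of De Morgan posets. -/
theorem stmt_5 {A : Type*} [PartialOrder A] [BoundedOrder A]
    (neg : A → A)
    (hanti : ∀ a b : A, a ≤ b → neg b ≤ neg a)
    (hinv : ∀ a : A, neg (neg a) = a)
    (D : Set A) (hDp : IsProperDownSet D) :
    Monotone (kappa neg D) ∧
    kappa neg D ⊥ = (false, false) ∧
    kappa neg D ⊤ = (true, true) ∧
    (∀ a : A, kappa neg D (neg a) = negM2 (kappa neg D a)) := by
  obtain ⟨⟨d, hd⟩, hne, hdown⟩ := hDp
  have hmono : ∀ a b : A, a ≤ b → hD D a ≤ hD D b := by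
    intro a b hab
    unfold hD
    by_cases hb : b ∈ D
    · simp [hb, hdown hab hb]
    · simp [hb]
  have hbot : ⊥ ∈ D := hdown bot_le hd
  have htop : ⊤ ∉ D := by
    intro h
    exact hne (Set.eq_univ_of_forall fun x => hdown le_top h)
  have hnegbot : neg ⊥ ∉ D := by
    intro h
    apply hne
    apply Set.eq_univ_of_forall
    intro x
    have : x ≤ neg ⊥ := by
      have := hanti ⊥ (neg x) bot_le
      rwa [hinv] at this
    exact hdown this h
  have hnegtop : neg ⊤ ∈ D := by
    have : neg ⊤ ≤ ⊥ := by
      have := hanti (neg ⊥) ⊤ le_top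
      rwa [hinv] at this
    exact hdown this hbot
  refine ⟨?_, ?_, ?_, ?_⟩
  · intro a b hab
    constructor
    · exact hmono a b hab
    · have := hmono (neg b) (neg a) (hanti a b hab)
      revert this
      simp only [kappa]
      cases hD D (neg b) <;> cases hD D (neg a) <;> simp
  · simp [kappa, hD, hbot, hnegbot]
  · simp [kappa, hD, htop, hnegtop]
  · intro a
    simp [kappa, negM2, hinv]
end

section
/- Let A be a De Morgan poset and let T be the set of nonempty proper down-sets of A. The map i : A → (T → M₂) given by i(a)(D) = κ_D(a) is an order-reflecting morphism of De Morgan posets: i is monotone and order reflecting (i(a) ≤ i(b) pointwise iff a ≤ b), i(0) and i(1) are the constant functions at the bottom and top of M₂, and i(a') = (i(a))' where negation on T → M₂ is pointwise. -/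
lemma hD_le {A : Type*} {D : Set A} {a b : A} (h : b ∈ D → a ∈ D) :
    hD D a ≤ hD D b := by
  unfold hD
  by_cases hb : b ∈ D <;> by_cases ha : a ∈ D <;> simp_all

lemma hD_mem {A : Type*} {D : Set A} {a : A} (h : a ∈ D) : hD D a = false := by
  simp [hD, h]

lemma hD_not_mem {A : Type*} {D : Set A} {a : A} (h : a ∉ D) : hD D a = true := by
  simp [hD, h]

/-- The map `i : A → (T → M₂)`, `i(a)(D) = κ_D(a)`, where `T` is the set of
nonempty proper down-sets of `A`, is an order-reflecting morphism of De Morgan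
posets. -/
theorem stmt_8 {A : Type*} [PartialOrder A] [BoundedOrder A]
    (neg : A → A)
    (hanti : ∀ a b : A, a ≤ b → neg b ≤ neg a)
    (hinv : ∀ a : A, neg (neg a) = a) :
    Monotone (fun (a : A) (D : {D : Set A // IsProperDownSet D}) => kappa neg D.1 a) ∧
    (∀ a b : A,
      ((fun D : {D : Set A // IsProperDownSet D} => kappa neg D.1 a) ≤
        fun D : {D : Set A // IsProperDownSet D} => kappa neg D.1 b) ↔ a ≤ b) ∧
    ((fun D : {D : Set A // IsProperDownSet D} => kappa neg D.1 (⊥ : A)) =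
      fun _ => ((false, false) : Bool × Bool)) ∧
    ((fun D : {D : Set A // IsProperDownSet D} => kappa neg D.1 (⊤ : A)) =
      fun _ => ((true, true) : Bool × Bool)) ∧
    (∀ a : A,
      (fun D : {D : Set A // IsProperDownSet D} => kappa neg D.1 (neg a)) =
        fun D : {D : Set A // IsProperDownSet D} => negM2 (kappa neg D.1 a)) := by
  have kmono : ∀ (D : Set A), IsDownSet D → ∀ a b : A, a ≤ b →
      kappa neg D a ≤ kappa neg D b := by
    intro D hdown a b hab
    constructor
    · exact hD_le (fun hb => hdown hab hb)
    · simp only [kappa]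
      have : hD D (neg b) ≤ hD D (neg a) :=
        hD_le (fun hb => hdown (hanti a b hab) hb)
      revert this
      cases hD D (neg b) <;> cases hD D (neg a) <;> simp
  refine ⟨?_, ?_, ?_, ?_, ?_⟩
  · intro a b hab D
    exact kmono D.1 D.2.2.2 a b hab
  · intro a b
    constructor
    · intro h
      by_cases hab : a ≤ b
      · exact hab
      · exfalso
        have hprop : IsProperDownSet {x : A | x ≤ b} := by
          refine ⟨⟨b, le_refl b⟩, ?_, fun x y hxy hy => le_trans hxy hy⟩
          intro huniv
          exact hab (huniv ▸ Set.mem_univ a : a ∈ {x : A | x ≤ b})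
        have := (h ⟨_, hprop⟩).1
        simp only [kappa] at this
        rw [hD_mem (show b ∈ {x : A | x ≤ b} from le_refl b)] at this
        have ha : hD {x : A | x ≤ b} a = false := le_antisymm this (Bool.false_le _)
        by_cases hmem : a ∈ {x : A | x ≤ b}
        · exact hab hmem
        · rw [hD_not_mem hmem] at ha; simp at ha
    · intro hab D
      exact kmono D.1 D.2.2.2 a b hab
  · funext D
    have hbot : (⊥ : A) ∈ D.1 := by
      obtain ⟨x, hx⟩ := D.2.1
      exact D.2.2.2 bot_le hx
    have htop : neg (⊥ : A) ∉ D.1 := by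
      have hnegbot : neg (⊥ : A) = ⊤ := by
        apply le_antisymm le_top
        have := hanti ⊥ (neg ⊤) bot_le
        rwa [hinv] at this
      rw [hnegbot]
      intro htop
      apply D.2.2.1
      exact Set.eq_univ_of_forall (fun x => D.2.2.2 le_top htop)
    simp [kappa, hD_mem hbot, hD_not_mem htop]
  · funext D
    have htop : (⊤ : A) ∉ D.1 := by
      intro htop
      apply D.2.2.1
      exact Set.eq_univ_of_forall (fun x => D.2.2.2 le_top htop)
    have hnegtop : neg (⊤ : A) ∈ D.1 := by
      have h : neg (⊤ : A) = ⊥ := by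
        apply le_antisymm _ bot_le
        have := hanti (neg ⊥) ⊤ le_top
        rwa [hinv] at this
      rw [h]
      obtain ⟨x, hx⟩ := D.2.1
      exact D.2.2.2 bot_le hx
    simp [kappa, hD_not_mem htop, hD_mem hnegtop]
  · intro a
    funext D
    simp [kappa, negM2, hinv]
end

section
/- Let A be a De Morgan poset and G a partial semi-tense operator on A with domain dom G. Then for every b ∈ dom G and every nonempty proper down-set D of A, κ_D(G(b)) = ⨅{ κ_E(b) : E a nonempty proper down-set with D R_G E }, the infimum taken in M₂ (viewed as a complete lattice). -/
lemma hD_eq_false_iff {A : Type*} {D : Set A} {a : A} : hD D a = false ↔ a ∈ D := by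
  by_cases h : a ∈ D <;> simp [hD, h]

lemma hD_eq_true_iff {A : Type*} {D : Set A} {a : A} : hD D a = true ↔ a ∉ D := by
  by_cases h : a ∈ D <;> simp [hD, h]

lemma bool_le_of {a b : Bool} (h : b = false → a = false) : a ≤ b := by
  cases a <;> cases b <;> simp_all

/-- Representation of a partial semi-tense operator `G`: for `b ∈ dom G` and a
nonempty proper down-set `D`, `κ_D(G(b)) = ⨅ {κ_E(b) : D R_G E}` in `M₂`. -/
theorem stmt_9 {A : Type*} [PartialOrder A] [BoundedOrder A]
    (neg : A → A)
    (hanti : ∀ a b : A, a ≤ b → neg b ≤ neg a)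
    (hinv : ∀ a : A, neg (neg a) = a)
    (domG : Set A) (G : A → A)
    (hbot : (⊥ : A) ∈ domG) (htop : (⊤ : A) ∈ domG)
    (hG0 : G ⊥ = ⊥) (hG1 : G ⊤ = ⊤)
    (hP2 : ∀ x ∈ domG, ∀ y ∈ domG, x ≤ y → G x ≤ G y)
    (hP4 : ∀ x y : A, x ≤ y → x ∈ domG → neg y ∈ domG → G x ≤ neg (G (neg y)))
    (b : A) (hb : b ∈ domG)
    (D : Set A) (hDp : IsProperDownSet D) :
    kappa neg D (G b) =
      sInf {m : Bool × Bool |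
        ∃ E : Set A, IsProperDownSet E ∧ RG neg domG G D E ∧ m = kappa neg E b} := by
  classical
  obtain ⟨hDne, hDproper, hDdown⟩ := hDp
  have hnegbot : neg (⊥ : A) = ⊤ := by
    have h1 : neg (neg (⊤ : A)) ≤ neg ⊥ := hanti ⊥ (neg ⊤) bot_le
    rw [hinv] at h1
    exact le_antisymm le_top h1
  have hnegtop : neg (⊤ : A) = ⊥ := by
    have h := congrArg neg hnegbot
    rw [hinv] at h
    exact h.symm
  have hbotD : (⊥ : A) ∈ D := by
    obtain ⟨a, ha⟩ := hDne
    exact hDdown bot_le ha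
  have htopD : (⊤ : A) ∉ D := by
    intro h
    exact hDproper (Set.eq_univ_iff_forall.2 fun x => hDdown le_top h)
  apply le_antisymm
  · refine le_sInf ?_
    rintro m ⟨E, hE, hRG, rfl⟩
    exact hRG b hb
  · rw [Prod.le_def]
    constructor
    · -- first coordinate
      show _ ≤ hD D (G b)
      apply bool_le_of
      intro h1
      have hGbD : G b ∈ D := hD_eq_false_iff.1 h1
      set E₁ : Set A := {a | ∃ x ∈ domG, (a ≤ x ∧ G x ∈ D) ∨ (a ≤ neg x ∧ neg (G x) ∈ D)}
        with hE₁def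
      have hbE₁ : b ∈ E₁ := ⟨b, hb, Or.inl ⟨le_refl b, hGbD⟩⟩
      have hE₁p : IsProperDownSet E₁ := by
        refine ⟨⟨⊥, ⟨⊥, hbot, Or.inl ⟨le_refl ⊥, by rw [hG0]; exact hbotD⟩⟩⟩, ?_, ?_⟩
        · intro h
          have : (⊤ : A) ∈ E₁ := h ▸ Set.mem_univ ⊤
          obtain ⟨x, hx, hc⟩ := this
          rcases hc with ⟨hle, hGx⟩ | ⟨hle, hGx⟩
          · have : x = ⊤ := le_antisymm le_top hle
            subst this
            rw [hG1] at hGx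
            exact htopD hGx
          · have hnx : neg x = ⊤ := le_antisymm le_top hle
            have : x = ⊥ := by
              have h := congrArg neg hnx
              rwa [hinv, hnegtop] at h
            subst this
            rw [hG0, hnegbot] at hGx
            exact htopD hGx
        · intro u v huv hv
          obtain ⟨x, hx, hc⟩ := hv
          rcases hc with ⟨hle, hGx⟩ | ⟨hle, hGx⟩
          · exact ⟨x, hx, Or.inl ⟨le_trans huv hle, hGx⟩⟩
          · exact ⟨x, hx, Or.inr ⟨le_trans huv hle, hGx⟩⟩
      have hRG₁ : RG neg domG G D E₁ := by
        intro x hx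
        simp only [kappa, Prod.le_def]
        constructor
        · apply bool_le_of
          intro h
          have hxE : x ∈ E₁ := hD_eq_false_iff.1 h
          refine hD_eq_false_iff.2 ?_
          obtain ⟨z, hz, hc⟩ := hxE
          rcases hc with ⟨hle, hGz⟩ | ⟨hle, hGz⟩
          · exact hDdown (hP2 x hx z hz hle) hGz
          · have h4 := hP4 x (neg z) hle hx (by rw [hinv]; exact hz)
            rw [hinv] at h4
            exact hDdown h4 hGz
        · apply bool_le_of
          intro h
          simp only [Bool.not_eq_false'] at h ⊢
          have hnxE : neg x ∉ E₁ := hD_eq_true_iff.1 h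
          refine hD_eq_true_iff.2 fun hnGxD => hnxE ?_
          exact ⟨x, hx, Or.inr ⟨le_refl _, hnGxD⟩⟩
      have hmem : kappa neg E₁ b ∈
          {m : Bool × Bool | ∃ E : Set A, IsProperDownSet E ∧ RG neg domG G D E ∧
            m = kappa neg E b} := ⟨E₁, hE₁p, hRG₁, rfl⟩
      have hle := (sInf_le hmem).1
      have heq : (kappa neg E₁ b).1 = false := hD_eq_false_iff.2 hbE₁
      rw [heq] at hle
      exact le_antisymm hle (Bool.false_le _)
    · -- second coordinate
      show _ ≤ ! hD D (neg (G b))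
      apply bool_le_of
      intro h2
      rw [Bool.not_eq_false'] at h2
      have hnGbD : neg (G b) ∉ D := hD_eq_true_iff.1 h2
      set E₂ : Set A := {a | ∀ x ∈ domG, (x ≤ a → G x ∈ D) ∧ (neg x ≤ a → neg (G x) ∈ D)}
        with hE₂def
      have hnbE₂ : neg b ∉ E₂ := by
        intro hmem
        exact hnGbD ((hmem b hb).2 (le_refl _))
      have hE₂p : IsProperDownSet E₂ := by
        refine ⟨⟨⊥, ?_⟩, ?_, ?_⟩
        · intro x hx
          constructor
          · intro hle
            have : x = ⊥ := le_antisymm hle bot_le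
            subst this; rw [hG0]; exact hbotD
          · intro hle
            have hnx : neg x = ⊥ := le_antisymm hle bot_le
            have : x = ⊤ := by
              have h := congrArg neg hnx
              rwa [hinv, hnegbot] at h
            subst this; rw [hG1, hnegtop]; exact hbotD
        · intro h
          have hmem : (⊤ : A) ∈ E₂ := h ▸ Set.mem_univ ⊤
          have := (hmem ⊤ htop).1 le_top
          rw [hG1] at this
          exact htopD this
        · intro u v huv hv x hx
          exact ⟨fun hle => (hv x hx).1 (le_trans hle huv),
                 fun hle => (hv x hx).2 (le_trans hle huv)⟩
      have hRG₂ : RG neg domG G D E₂ := by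
        intro x hx
        simp only [kappa, Prod.le_def]
        constructor
        · apply bool_le_of
          intro h
          have hxE : x ∈ E₂ := hD_eq_false_iff.1 h
          exact hD_eq_false_iff.2 ((hxE x hx).1 (le_refl x))
        · apply bool_le_of
          intro h
          simp only [Bool.not_eq_false'] at h ⊢
          have hnxE : neg x ∉ E₂ := hD_eq_true_iff.1 h
          refine hD_eq_true_iff.2 fun hnGxD => hnxE ?_
          intro z hz
          constructor
          · intro hle
            have h4 := hP4 z (neg x) hle hz (by rw [hinv]; exact hx)
            rw [hinv] at h4
            exact hDdown h4 hnGxD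
          · intro hle
            have hxz : x ≤ z := by
              have h5 := hanti _ _ hle
              rwa [hinv, hinv] at h5
            exact hDdown (hanti _ _ (hP2 x hx z hz hxz)) hnGxD
      have hmem : kappa neg E₂ b ∈
          {m : Bool × Bool | ∃ E : Set A, IsProperDownSet E ∧ RG neg domG G D E ∧
            m = kappa neg E b} := ⟨E₂, hE₂p, hRG₂, rfl⟩
      have hle := (sInf_le hmem).2
      have heq : (kappa neg E₂ b).2 = false := by
        show (! hD E₂ (neg b)) = false
        rw [hD_eq_true_iff.2 hnbE₂]
        rfl
      rw [heq] at hle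
      exact le_antisymm hle (Bool.false_le _)
end

section
/- Let A be a De Morgan poset and G a partial semi-tense operator on A with domain dom G. Let F be the dual of G, i.e., F(b) = (G(b'))' for all b with b' ∈ dom G. Then for every b with b' ∈ dom G and every nonempty proper down-set D of A, κ_D(F(b)) = ⨆{ κ_E(b) : E a nonempty proper down-set with D R_G E }, the supremum taken in M₂ (viewed as a complete lattice). -/
lemma hD_true_iff {A : Type*} (D : Set A) (a : A) : hD D a = true ↔ a ∉ D := by
  by_cases h : a ∈ D <;> simp [hD, h]

lemma hD_false_iff {A : Type*} (D : Set A) (a : A) : hD D a = false ↔ a ∈ D := by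
  by_cases h : a ∈ D <;> simp [hD, h]

lemma kappa_le_kappa {A : Type*} (neg : A → A) (D E : Set A) (a c : A) :
    kappa neg D a ≤ kappa neg E c ↔ ((c ∈ E → a ∈ D) ∧ (neg a ∈ D → neg c ∈ E)) := by
  simp only [kappa, Prod.mk_le_mk]
  by_cases h1 : a ∈ D <;> by_cases h2 : c ∈ E <;>
    by_cases h3 : neg a ∈ D <;> by_cases h4 : neg c ∈ E <;>
      simp [hD, h1, h2, h3, h4]

/-- Representation of the dual `F = G^∂` of a partial semi-tense operator `G`:
for `b` with `b' ∈ dom G` and a nonempty proper down-set `D`,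
`κ_D(F(b)) = ⨆ {κ_E(b) : D R_G E}` in `M₂`. -/
theorem stmt_10 {A : Type*} [PartialOrder A] [BoundedOrder A]
    (neg : A → A)
    (hanti : ∀ a b : A, a ≤ b → neg b ≤ neg a)
    (hinv : ∀ a : A, neg (neg a) = a)
    (domG : Set A) (G : A → A)
    (hbot : (⊥ : A) ∈ domG) (htop : (⊤ : A) ∈ domG)
    (hG0 : G ⊥ = ⊥) (hG1 : G ⊤ = ⊤)
    (hP2 : ∀ x ∈ domG, ∀ y ∈ domG, x ≤ y → G x ≤ G y)
    (hP4 : ∀ x y : A, x ≤ y → x ∈ domG → neg y ∈ domG → G x ≤ neg (G (neg y)))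
    (b : A) (hb : neg b ∈ domG)
    (D : Set A) (hDp : IsProperDownSet D) :
    kappa neg D (neg (G (neg b))) =
      sSup {m : Bool × Bool |
        ∃ E : Set A, IsProperDownSet E ∧ RG neg domG G D E ∧ m = kappa neg E b} := by
  obtain ⟨hDne, hDproper, hDdown⟩ := hDp
  set S := {m : Bool × Bool |
      ∃ E : Set A, IsProperDownSet E ∧ RG neg domG G D E ∧ m = kappa neg E b} with hS
  have hbotD : (⊥ : A) ∈ D := by
    obtain ⟨d, hd⟩ := hDne; exact hDdown bot_le hd
  have htopD : (⊤ : A) ∉ D := by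
    intro h
    exact hDproper (Set.eq_univ_of_forall fun a => hDdown le_top h)
  have hnegtop : neg ⊤ = ⊥ := by
    have h := hanti (neg ⊥) ⊤ le_top
    rw [hinv] at h
    exact le_antisymm h bot_le
  have hnegbot : neg ⊥ = ⊤ := by
    rw [← hnegtop, hinv]
  -- The auxiliary down-sets
  set E₁ : Set A := {a | ∃ z, z ∈ domG ∧ neg (G z) ∈ D ∧ a ≤ neg z} with hE₁def
  set E₂ : Set A := {a | a ≤ neg b ∨ a ∈ E₁} with hE₂def
  have hbotE₁ : (⊥ : A) ∈ E₁ := by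
    refine ⟨⊤, htop, ?_, bot_le⟩
    rw [hG1, hnegtop]; exact hbotD
  have htopE₁ : (⊤ : A) ∉ E₁ := by
    rintro ⟨z, hz, hzD, htz⟩
    have hzt : neg z = ⊤ := le_antisymm le_top htz
    have : z = ⊥ := by rw [← hinv z, hzt, hnegtop]
    rw [this, hG0, hnegbot] at hzD
    exact htopD hzD
  have hE₁down : IsDownSet E₁ := by
    rintro x y hxy ⟨z, hz, hzD, hyz⟩
    exact ⟨z, hz, hzD, le_trans hxy hyz⟩
  have hE₁p : IsProperDownSet E₁ :=
    ⟨⟨⊥, hbotE₁⟩, fun h => htopE₁ (h ▸ Set.mem_univ ⊤), hE₁down⟩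
  have hRG₁ : RG neg domG G D E₁ := by
    intro x hx
    rw [kappa_le_kappa]
    constructor
    · rintro ⟨z, hz, hzD, hxz⟩
      have h4 := hP4 x (neg z) hxz hx (by rwa [hinv])
      rw [hinv] at h4
      exact hDdown h4 hzD
    · intro hGx
      exact ⟨x, hx, hGx, le_rfl⟩
  -- Upper bound direction: sSup S ≤ κ_D(F b)
  have hub : sSup S ≤ kappa neg D (neg (G (neg b))) := by
    apply sSup_le
    rintro m ⟨E, hEp, hRE, rfl⟩
    rw [kappa_le_kappa]
    have h := (kappa_le_kappa neg D E (G (neg b)) (neg b)).mp (hRE (neg b) hb)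
    constructor
    · intro hFD
      have := h.2 hFD
      rwa [hinv] at this
    · intro hbE
      rw [hinv]
      exact h.1 hbE
  refine le_antisymm ?_ hub
  constructor
  · -- first component
    by_cases hFD : neg (G (neg b)) ∈ D
    · show hD D (neg (G (neg b))) ≤ _
      rw [(hD_false_iff D _).mpr hFD]
      exact Bool.false_le _
    · -- use E₁ ; b ∉ E₁
      have hbE₁ : b ∉ E₁ := by
        rintro ⟨z, hz, hzD, hbz⟩
        have hzb : z ≤ neg b := by
          have := hanti b (neg z) hbz
          rwa [hinv] at this
        have hGzb := hP2 z hz (neg b) hb hzb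
        have := hDdown (hanti (G z) (G (neg b)) hGzb) hzD
        exact hFD this
      have hmem : kappa neg E₁ b ∈ S := ⟨E₁, hE₁p, hRG₁, rfl⟩
      have h1 : (kappa neg E₁ b).1 ≤ (sSup S).1 := (le_sSup hmem).1
      have : (kappa neg E₁ b).1 = true := (hD_true_iff E₁ b).mpr hbE₁
      rw [this] at h1
      calc (kappa neg D (neg (G (neg b)))).1 ≤ true := Bool.le_true _
        _ ≤ (sSup S).1 := h1
  · -- second component
    by_cases hGD : G (neg b) ∈ D
    · -- use E₂
      have htopE₂ : (⊤ : A) ∉ E₂ := by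
        rintro (h | h)
        · have hnb : neg b = ⊤ := le_antisymm le_top h
          rw [hnb, hG1] at hGD
          exact htopD hGD
        · exact htopE₁ h
      have hE₂down : IsDownSet E₂ := by
        rintro x y hxy (h | h)
        · exact Or.inl (le_trans hxy h)
        · exact Or.inr (hE₁down hxy h)
      have hE₂p : IsProperDownSet E₂ :=
        ⟨⟨⊥, Or.inr hbotE₁⟩, fun h => htopE₂ (h ▸ Set.mem_univ ⊤), hE₂down⟩
      have hRG₂ : RG neg domG G D E₂ := by
        intro x hx
        rw [kappa_le_kappa]
        constructor
        · rintro (h | h)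
          · exact hDdown (hP2 x hx (neg b) hb h) hGD
          · obtain ⟨z, hz, hzD, hxz⟩ := h
            have h4 := hP4 x (neg z) hxz hx (by rwa [hinv])
            rw [hinv] at h4
            exact hDdown h4 hzD
        · intro hGx
          exact Or.inr ⟨x, hx, hGx, le_rfl⟩
      have hmem : kappa neg E₂ b ∈ S := ⟨E₂, hE₂p, hRG₂, rfl⟩
      have h2 : (kappa neg E₂ b).2 ≤ (sSup S).2 := (le_sSup hmem).2
      have hnbE₂ : neg b ∈ E₂ := Or.inl le_rfl
      have : (kappa neg E₂ b).2 = true := by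
        show (! hD E₂ (neg b)) = true
        rw [(hD_false_iff E₂ _).mpr hnbE₂]; rfl
      rw [this] at h2
      calc (kappa neg D (neg (G (neg b)))).2 ≤ true := Bool.le_true _
        _ ≤ (sSup S).2 := h2
    · show (! hD D (neg (neg (G (neg b))))) ≤ _
      rw [hinv, (hD_true_iff D _).mpr hGD]
      exact Bool.false_le _
end

section
/- Let A be a De Morgan poset and G a partial semi-tense operator on A with domain dom G. Then the relation R_G is serial: for every nonempty proper down-set D of A there exists a nonempty proper down-set E of A with D R_G E. -/
/-- The relation `R_G` induced by a partial semi-tense operator `G` is serial: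
for every nonempty proper down-set `D` there is a nonempty proper down-set `E`
with `D R_G E`. -/
theorem stmt_11 {A : Type*} [PartialOrder A] [BoundedOrder A]
    (neg : A → A)
    (hanti : ∀ a b : A, a ≤ b → neg b ≤ neg a)
    (hinv : ∀ a : A, neg (neg a) = a)
    (domG : Set A) (G : A → A)
    (hbot : (⊥ : A) ∈ domG) (htop : (⊤ : A) ∈ domG)
    (hG0 : G ⊥ = ⊥) (hG1 : G ⊤ = ⊤)
    (hP2 : ∀ x ∈ domG, ∀ y ∈ domG, x ≤ y → G x ≤ G y)
    (hP4 : ∀ x y : A, x ≤ y → x ∈ domG → neg y ∈ domG → G x ≤ neg (G (neg y))) :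
    ∀ D : Set A, IsProperDownSet D →
      ∃ E : Set A, IsProperDownSet E ∧ RG neg domG G D E := by

  intro D hDprop
  obtain ⟨hne, hproper, hdown⟩ := hDprop
  have hnegtop : neg ⊤ = ⊥ := by
    have h : neg ⊤ ≤ (⊥ : A) := by
      have := hanti (neg ⊥) ⊤ le_top
      rwa [hinv] at this
    exact le_bot_iff.mp h
  have hnegbot : neg ⊥ = ⊤ := by rw [← hnegtop, hinv]
  have hbotD : (⊥ : A) ∈ D := by
    obtain ⟨a, ha⟩ := hne
    exact hdown bot_le ha
  have htopD : (⊤ : A) ∉ D := fun h =>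
    hproper (Set.eq_univ_of_forall fun a => hdown le_top h)
  refine ⟨{a | ∃ x, x ∈ domG ∧ neg (G x) ∈ D ∧ a ≤ neg x}, ⟨⟨⊥, ⟨⊤, htop, ?_, ?_⟩⟩, ?_, ?_⟩, ?_⟩
  · rw [hG1, hnegtop]; exact hbotD
  · exact bot_le
  · intro h
    have hmem : (⊤ : A) ∈ {a | ∃ x, x ∈ domG ∧ neg (G x) ∈ D ∧ a ≤ neg x} := by
      rw [h]; exact Set.mem_univ ⊤
    obtain ⟨x, hx, hGx, hle⟩ := hmem
    have hnx : neg x = ⊤ := le_antisymm le_top hle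
    have hx0 : x = ⊥ := by
      have := congrArg neg hnx
      rwa [hinv, hnegtop] at this
    rw [hx0, hG0, hnegbot] at hGx
    exact htopD hGx
  · intro a b hab hb
    obtain ⟨x, hx, hGx, hle⟩ := hb
    exact ⟨x, hx, hGx, hab.trans hle⟩
  · intro x hx
    have h1 : x ∈ {a | ∃ y, y ∈ domG ∧ neg (G y) ∈ D ∧ a ≤ neg y} → G x ∈ D := by
      rintro ⟨y, hy, hGy, hle⟩
      have h := hP4 x (neg y) hle hx (by rwa [hinv])
      rw [hinv] at h
      exact hdown h hGy
    have h2 : neg (G x) ∈ D → neg x ∈ {a | ∃ y, y ∈ domG ∧ neg (G y) ∈ D ∧ a ≤ neg y} :=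
      fun h => ⟨x, hx, h, le_refl _⟩
    constructor
    · simp only [kappa, hD]
      by_cases hxE : x ∈ {a | ∃ y, y ∈ domG ∧ neg (G y) ∈ D ∧ a ≤ neg y}
      · simp [hxE, h1 hxE]
      · simp [hxE]
    · simp only [kappa, hD]
      by_cases hGxD : neg (G x) ∈ D
      · simp [hGxD, h2 hGxD]
      · simp [hGxD]
end

section
/- Let A be a De Morgan poset and G, H partial semi-tense operators on A such that R_G = (R_H)⁻¹ (i.e., D R_G E iff E R_H D for all nonempty proper down-sets D, E). Then for every b ∈ dom H and every nonempty proper down-set D of A, κ_D(H(b)) = ⨅{ κ_E(b) : E a nonempty proper down-set with E R_G D }, the infimum taken in M₂ (viewed as a complete lattice). -/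
/-- If `G` and `H` are partial semi-tense operators with `R_G = (R_H)⁻¹`, then
for `b ∈ dom H` and a nonempty proper down-set `D`,
`κ_D(H(b)) = ⨅ {κ_E(b) : E R_G D}` in `M₂`. -/
theorem stmt_12 {A : Type*} [PartialOrder A] [BoundedOrder A]
    (neg : A → A)
    (hanti : ∀ a b : A, a ≤ b → neg b ≤ neg a)
    (hinv : ∀ a : A, neg (neg a) = a)
    (domG : Set A) (G : A → A) (domH : Set A) (H : A → A)
    (hbotG : (⊥ : A) ∈ domG) (htopG : (⊤ : A) ∈ domG)
    (hG0 : G ⊥ = ⊥) (hG1 : G ⊤ = ⊤)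
    (hP2G : ∀ x ∈ domG, ∀ y ∈ domG, x ≤ y → G x ≤ G y)
    (hP4G : ∀ x y : A, x ≤ y → x ∈ domG → neg y ∈ domG → G x ≤ neg (G (neg y)))
    (hbotH : (⊥ : A) ∈ domH) (htopH : (⊤ : A) ∈ domH)
    (hH0 : H ⊥ = ⊥) (hH1 : H ⊤ = ⊤)
    (hP2H : ∀ x ∈ domH, ∀ y ∈ domH, x ≤ y → H x ≤ H y)
    (hP4H : ∀ x y : A, x ≤ y → x ∈ domH → neg y ∈ domH → H x ≤ neg (H (neg y)))
    (hGH : ∀ D E : Set A, IsProperDownSet D → IsProperDownSet E →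
      (RG neg domG G D E ↔ RG neg domH H E D)) :
    ∀ b ∈ domH, ∀ D : Set A, IsProperDownSet D →
      kappa neg D (H b) =
        sInf {m : Bool × Bool |
          ∃ E : Set A, IsProperDownSet E ∧ RG neg domG G E D ∧ m = kappa neg E b} := by
  intro b hb D hDp
  obtain ⟨⟨d, hd⟩, hDne, hDdown⟩ := hDp
  have hDp' : IsProperDownSet D := ⟨⟨d, hd⟩, hDne, hDdown⟩
  have botD : (⊥ : A) ∈ D := hDdown bot_le hd
  have topD : (⊤ : A) ∉ D := fun h => hDne (Set.eq_univ_of_forall fun x => hDdown le_top h)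
  have negTop : neg (⊤ : A) = ⊥ := by
    have h1 : neg (⊤ : A) ≤ neg (neg ⊥) := hanti (neg ⊥) ⊤ le_top
    rw [hinv] at h1
    exact le_bot_iff.mp h1
  have negBot : neg (⊥ : A) = ⊤ := by
    rw [← negTop, hinv]
  have hDfalse : ∀ (E : Set A) (a : A), a ∈ E → hD E a = false := by
    intro E a h; simp [hD, h]
  have hDtrue : ∀ (E : Set A) (a : A), a ∉ E → hD E a = true := by
    intro E a h; simp [hD, h]
  set S : Set (Bool × Bool) :=
    {m : Bool × Bool |
      ∃ E : Set A, IsProperDownSet E ∧ RG neg domG G E D ∧ m = kappa neg E b} with hS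
  -- a generic way to produce elements of S
  have main : ∀ E : Set A, IsProperDownSet E →
      (∀ z ∈ domH, z ∈ E → H z ∈ D) →
      (∀ x ∈ domH, neg (H x) ∈ D → neg x ∈ E) →
      kappa neg E b ∈ S := by
    intro E hEp ha hbnd
    refine ⟨E, hEp, ?_, rfl⟩
    rw [hGH E D hEp hDp']
    intro x hx
    constructor
    · simp only [kappa]
      by_cases hxe : x ∈ E
      · rw [hDfalse D (H x) (ha x hx hxe)]; exact bot_le
      · rw [hDtrue E x hxe]; exact le_top
    · simp only [kappa]
      by_cases hnd : neg (H x) ∈ D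
      · rw [hDfalse E (neg x) (hbnd x hx hnd)]; simp
      · rw [hDtrue D (neg (H x)) hnd]; simp
  -- the base set E₀
  set E0 : Set A := {z | ∃ x, x ∈ domH ∧ neg (H x) ∈ D ∧ z ≤ neg x} with hE0
  have hE0top : (⊤ : A) ∉ E0 := by
    rintro ⟨x, hx, hxd, hxt⟩
    have hxeq : neg x = ⊤ := le_antisymm le_top hxt
    have : x = ⊥ := by rw [← hinv x, hxeq, negTop]
    rw [this, hH0, negBot] at hxd
    exact topD hxd
  have hE0p : IsProperDownSet E0 := by
    refine ⟨⟨⊥, ⊤, htopH, ?_, ?_⟩, ?_, ?_⟩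
    · rw [hH1, negTop]; exact botD
    · rw [negTop]
    · intro h
      exact hE0top (h ▸ Set.mem_univ ⊤)
    · rintro u v huv ⟨x, hx, hxd, hv⟩
      exact ⟨x, hx, hxd, le_trans huv hv⟩
  have hE0a : ∀ z ∈ domH, z ∈ E0 → H z ∈ D := by
    rintro z hz ⟨x, hx, hxd, hzx⟩
    have : H z ≤ neg (H (neg (neg x))) := hP4H z (neg x) hzx hz (by rw [hinv]; exact hx)
    rw [hinv] at this
    exact hDdown this hxd
  have hE0b : ∀ x ∈ domH, neg (H x) ∈ D → neg x ∈ E0 := by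
    intro x hx hxd
    exact ⟨x, hx, hxd, le_rfl⟩
  apply le_antisymm
  · apply le_sInf
    rintro m ⟨E, hEp, hRG, rfl⟩
    exact ((hGH E D hEp hDp').mp hRG) b hb
  · rw [Prod.le_def]
    constructor
    · -- first component
      by_cases hbd : H b ∈ D
      · -- use E1 = E0 ∪ {z ≤ b}
        set E1 : Set A := {z | z ≤ b} ∪ E0 with hE1
        have hE1top : (⊤ : A) ∉ E1 := by
          rintro (h | h)
          · have : b = ⊤ := le_antisymm le_top h
            rw [this, hH1] at hbd
            exact topD hbd
          · exact hE0top h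
        have hE1p : IsProperDownSet E1 := by
          refine ⟨⟨b, Or.inl le_rfl⟩, ?_, ?_⟩
          · intro h; exact hE1top (h ▸ Set.mem_univ ⊤)
          · rintro u v huv (h | h)
            · exact Or.inl (le_trans huv h)
            · exact Or.inr (hE0p.2.2 huv h)
        have h1 : kappa neg E1 b ∈ S := by
          apply main E1 hE1p
          · rintro z hz (h | h)
            · exact hDdown (hP2H z hz b hb h) hbd
            · exact hE0a z hz h
          · intro x hx hxd
            exact Or.inr (hE0b x hx hxd)
        have h2 : sInf S ≤ kappa neg E1 b := sInf_le h1
        have h3 : (sInf S).1 ≤ (kappa neg E1 b).1 := h2.1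
        have h4 : (kappa neg E1 b).1 = false := hDfalse E1 b (Or.inl le_rfl)
        rw [h4] at h3
        have h5 : (kappa neg D (H b)).1 = false := hDfalse D (H b) hbd
        rw [h5]
        exact h3
      · have : (kappa neg D (H b)).1 = true := hDtrue D (H b) hbd
        rw [this]; exact le_top
    · -- second component
      by_cases hnd : neg (H b) ∈ D
      · have : (kappa neg D (H b)).2 = true := by
          simp [kappa, hDfalse D (neg (H b)) hnd]
        rw [this]; exact le_top
      · have hnbE0 : neg b ∉ E0 := by
          rintro ⟨x, hx, hxd, hbx⟩
          have hxb : x ≤ b := by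
            have := hanti (neg b) (neg x) hbx
            rwa [hinv, hinv] at this
          have : neg (H b) ≤ neg (H x) := hanti (H x) (H b) (hP2H x hx b hb hxb)
          exact hnd (hDdown this hxd)
        have h1 : kappa neg E0 b ∈ S := main E0 hE0p hE0a hE0b
        have h2 : (sInf S).2 ≤ (kappa neg E0 b).2 := (sInf_le h1).2
        have h3 : (kappa neg E0 b).2 = false := by
          simp [kappa, hDtrue E0 (neg b) hnbE0]
        rw [h3] at h2
        have h4 : (kappa neg D (H b)).2 = false := by
          simp [kappa, hDtrue D (neg (H b)) hnd]
        rw [h4]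
        exact h2
end

section
/- Let (A; G, H) be a partial dynamic De Morgan algebra such that (a) x ∈ dom G implies G(x)' ∈ dom H, and (b) x ∈ dom H implies H(x)' ∈ dom G. Then R_G = (R_H)⁻¹, i.e., for all nonempty proper down-sets D, E of A: D R_G E if and only if E R_H D. -/
lemma hD_le_iff {A : Type*} (D E : Set A) (a b : A) :
    hD D a ≤ hD E b ↔ (b ∈ E → a ∈ D) := by
  unfold hD
  by_cases ha : a ∈ D <;> by_cases hb : b ∈ E <;> simp [ha, hb]

lemma kappa_le_iff {A : Type*} (neg : A → A) (D E : Set A) (a b : A) :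
    kappa neg D a ≤ kappa neg E b ↔
      ((b ∈ E → a ∈ D) ∧ (neg a ∈ D → neg b ∈ E)) := by
  have hnot : ∀ x y : Bool, ((!x) ≤ (!y)) ↔ y ≤ x := by decide
  rw [kappa, kappa, Prod.mk_le_mk, hD_le_iff, hnot, hD_le_iff]

/-- For a partial dynamic De Morgan algebra `(A; G, H)` satisfying the domain
conditions (a) and (b), the induced relations satisfy `R_G = (R_H)⁻¹`. -/
theorem stmt_13 {A : Type*} [PartialOrder A] [BoundedOrder A]
    (neg : A → A)
    (hanti : ∀ a b : A, a ≤ b → neg b ≤ neg a)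
    (hinv : ∀ a : A, neg (neg a) = a)
    (domG : Set A) (G : A → A) (domH : Set A) (H : A → A)
    -- (P1)
    (hbotG : (⊥ : A) ∈ domG) (htopG : (⊤ : A) ∈ domG)
    (hbotH : (⊥ : A) ∈ domH) (htopH : (⊤ : A) ∈ domH)
    (hG0 : G ⊥ = ⊥) (hG1 : G ⊤ = ⊤) (hH0 : H ⊥ = ⊥) (hH1 : H ⊤ = ⊤)
    -- (P2)
    (hP2G : ∀ x ∈ domG, ∀ y ∈ domG, x ≤ y → G x ≤ G y)
    (hP2H : ∀ x ∈ domH, ∀ y ∈ domH, x ≤ y → H x ≤ H y)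
    -- (P3)
    (hP3G : ∀ x : A, neg x ∈ domH → neg (H (neg x)) ∈ domG →
      x ≤ G (neg (H (neg x))))
    (hP3H : ∀ x : A, neg x ∈ domG → neg (G (neg x)) ∈ domH →
      x ≤ H (neg (G (neg x))))
    -- (P4)
    (hP4G : ∀ x y : A, x ≤ y → x ∈ domG → neg y ∈ domG → G x ≤ neg (G (neg y)))
    (hP4H : ∀ x y : A, x ≤ y → x ∈ domH → neg y ∈ domH → H x ≤ neg (H (neg y)))
    -- domain conditions (a) and (b)
    (ha : ∀ x ∈ domG, neg (G x) ∈ domH)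
    (hb : ∀ x ∈ domH, neg (H x) ∈ domG) :
    ∀ D E : Set A, IsProperDownSet D → IsProperDownSet E →
      (RG neg domG G D E ↔ RG neg domH H E D) := by
  intro D E hDp hEp
  obtain ⟨-, -, hDdown⟩ := hDp
  obtain ⟨-, -, hEdown⟩ := hEp
  constructor
  · intro hRG x hx
    rw [kappa_le_iff]
    have h1 : ∀ y ∈ domG, y ∈ E → G y ∈ D :=
      fun y hy => ((kappa_le_iff neg D E (G y) y).mp (hRG y hy)).1
    have h2 : ∀ y ∈ domG, neg (G y) ∈ D → neg y ∈ E :=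
      fun y hy => ((kappa_le_iff neg D E (G y) y).mp (hRG y hy)).2
    have hxG : neg (H x) ∈ domG := hb x hx
    have hle : neg x ≤ G (neg (H x)) := by
      have := hP3G (neg x) (by rw [hinv]; exact hx) (by rw [hinv]; exact hxG)
      rwa [hinv] at this
    constructor
    · intro hxD
      have key : neg (G (neg (H x))) ∈ D := by
        refine hDdown ?_ hxD
        have := hanti _ _ hle
        rwa [hinv] at this
      have := h2 (neg (H x)) hxG key
      rwa [hinv] at this
    · intro hE
      exact hDdown hle (h1 (neg (H x)) hxG hE)
  · intro hRH x hx
    rw [kappa_le_iff]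
    have h1 : ∀ y ∈ domH, y ∈ D → H y ∈ E :=
      fun y hy => ((kappa_le_iff neg E D (H y) y).mp (hRH y hy)).1
    have h2 : ∀ y ∈ domH, neg (H y) ∈ E → neg y ∈ D :=
      fun y hy => ((kappa_le_iff neg E D (H y) y).mp (hRH y hy)).2
    have hxH : neg (G x) ∈ domH := ha x hx
    have hle : neg x ≤ H (neg (G x)) := by
      have := hP3H (neg x) (by rw [hinv]; exact hx) (by rw [hinv]; exact hxH)
      rwa [hinv] at this
    constructor
    · intro hxD
      have key : neg (H (neg (G x))) ∈ E := by
        refine hEdown ?_ hxD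
        have := hanti _ _ hle
        rwa [hinv] at this
      have := h2 (neg (G x)) hxH key
      rwa [hinv] at this
    · intro hE
      exact hEdown hle (h1 (neg (G x)) hxH hE)
end
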